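/- Let (R, m) be a Noetherian local ring. The ideal Z(R) of polynomials vanishing on all of R contains a nonzero polynomial if and only if depth R = 0 and the residue field R/m is finite. -/

import Mathlib

open Polynomial IsLocalRing

/-- The ideal of polynomials in `R[X]` mapping every element of `S` into the ideal `I`. -/
def zeroFunctionsInto {R : Type*} [CommRing R] (S : Set R) (I : Ideal R) : Ideal R[X] where
  carrier := {f | ∀ s ∈ S, f.eval s ∈ I}
  add_mem' := fun hf hg s hs => by simpa using I.add_mem (hf s hs) (hg s hs)
  zero_mem' := fun s _ => by simp
  smul_mem' := fun c f hf s hs => by simpa using I.mul_mem_left (c.eval s) (hf s hs)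

/-- The ideal of polynomials vanishing on the subset `S`. -/
def zeroFunctions {R : Type*} [CommRing R] (S : Set R) : Ideal R[X] :=
  zeroFunctionsInto S ⊥

lemma mem_zeroFunctions_iff {R : Type*} [CommRing R] {S : Set R} {f : R[X]} :
    f ∈ zeroFunctions S ↔ ∀ s ∈ S, f.eval s = 0 := by
  constructor
  · intro h s hs
    simpa using h s hs
  · intro h s hs
    simpa using h s hs

/-- Key lemma: a polynomial of degree ≤ n vanishing at n+1 points whose pairwise
differences are nonzerodivisors is zero. -/
lemma eq_zero_of_eval_zero_aux {R : Type*} [CommRing R] :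
    ∀ (n : ℕ) (v : ℕ → R), (∀ i j : ℕ, i < j → v j - v i ∈ nonZeroDivisors R) →
      ∀ f : R[X], f.natDegree ≤ n → (∀ i ≤ n, f.eval (v i) = 0) → f = 0 := by
  intro n
  induction n with
  | zero =>
    intro v hv f hdeg heval
    have h0 := heval 0 le_rfl
    rw [Polynomial.eq_C_of_natDegree_le_zero hdeg] at h0 ⊢
    simpa using h0
  | succ n ih =>
    intro v hv f hdeg heval
    rcases subsingleton_or_nontrivial R with hR | hR
    · exact Subsingleton.elim f 0
    have hroot : IsRoot f (v 0) := heval 0 (Nat.zero_le _)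
    obtain ⟨g, hg⟩ := (Polynomial.dvd_iff_isRoot).mpr hroot
    by_cases hg0 : g = 0
    · rw [hg, hg0, mul_zero]
    have hlc : (X - C (v 0)).leadingCoeff * g.leadingCoeff ≠ 0 := by
      rw [(Polynomial.monic_X_sub_C (v 0)).leadingCoeff, one_mul]
      exact Polynomial.leadingCoeff_ne_zero.mpr hg0
    have hgdeg : g.natDegree ≤ n := by
      have hmul := Polynomial.natDegree_mul' hlc
      rw [hg, hmul, Polynomial.natDegree_X_sub_C] at hdeg
      omega
    have hzero : g = 0 := by
      refine ih (fun i => v (i + 1)) (fun i j hij => hv (i + 1) (j + 1) (by omega)) g hgdeg ?_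
      intro i hi
      have he := heval (i + 1) (by omega)
      rw [hg, Polynomial.eval_mul] at he
      have hd := hv 0 (i + 1) (Nat.succ_pos i)
      rw [mul_comm] at he
      simpa using (mul_right_mem_nonZeroDivisors_eq_zero_iff hd).mp (by simpa using he)
    exact absurd hzero hg0

/-- If every element of the maximal ideal is a zerodivisor, some nonzero element
annihilates the maximal ideal. -/
lemma exists_ann {R : Type*} [CommRing R] [IsNoetherianRing R] [IsLocalRing R]
    (hzd : ∀ a ∈ maximalIdeal R, a ∉ nonZeroDivisors R) :
    ∃ c : R, c ≠ 0 ∧ ∀ t ∈ maximalIdeal R, c * t = 0 := by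
  classical
  obtain ⟨t, ht, hprim, hrad, hirr⟩ := Ideal.IsLasker.minimal (Ideal.isLasker R R) ⊥
  -- maximal ideal is contained in the union of radicals
  have hsub : (maximalIdeal R : Set R) ⊆
      ⋃ J ∈ (t : Set (Ideal R)), (Ideal.radical J : Set R) := by
    intro a ha
    have hnz := hzd a ha
    rw [mem_nonZeroDivisors_iff_right] at hnz
    push_neg at hnz
    obtain ⟨b, hb, hbne⟩ := hnz
    have hbnotbot : b ∉ (⊥ : Ideal R) := by simpa using hbne
    rw [← ht] at hbnotbot
    obtain ⟨J, hJ, hbJ⟩ : ∃ J ∈ t, b ∉ J := by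
      by_contra h
      push_neg at h
      exact hbnotbot (by simpa [Finset.inf_eq_iInf, Submodule.mem_iInf] using fun J hJ => h J hJ)
    have hba : b * a ∈ J := by
      rw [hb]
      exact J.zero_mem
    rcases (Ideal.isPrimary_iff.mp (hprim hJ)).2 hba with h | h
    · exact absurd h hbJ
    · exact Set.mem_biUnion hJ h
  obtain ⟨J, hJt, hle⟩ := (Ideal.subset_union_prime (⊥ : Ideal R) ⊥
    (fun i hi _ _ => Ideal.isPrime_radical (hprim hi))).mp hsub
  have hmeq : maximalIdeal R = J.radical :=
    ((maximalIdeal.isMaximal R).eq_of_le (Ideal.isPrime_radical (hprim hJt)).1 hle)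
  -- irredundancy gives b in all others but not J
  have hnle := hirr hJt
  rw [SetLike.not_le_iff_exists] at hnle
  obtain ⟨b, hb1, hb2⟩ := hnle
  have hbne : b ≠ 0 := fun h => hb2 (h ▸ J.zero_mem)
  obtain ⟨n, hn⟩ := Ideal.exists_pow_le_of_le_radical_of_fg (hmeq.le)
    (IsNoetherian.noetherian (maximalIdeal R))
  have hPn : ∀ x ∈ (maximalIdeal R) ^ n, x * b = 0 := by
    intro x hx
    have hbot : x * b ∈ t.inf id := by
      rw [Submodule.mem_finsetInf]
      intro K hK
      show x * b ∈ K
      by_cases hKJ : K = J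
      · subst hKJ
        exact Ideal.mul_mem_right b K (hn hx)
      · have hKle : (t.erase J).inf id ≤ id K :=
          Finset.inf_le (Finset.mem_erase.mpr ⟨hKJ, hK⟩)
        exact Ideal.mul_mem_left K x (hKle hb1)
    rw [ht] at hbot
    simpa using hbot
  have hex : ∃ k, ∀ x ∈ (maximalIdeal R) ^ k, x * b = 0 := ⟨n, hPn⟩
  have hfind := Nat.find_spec hex
  have h0 : ¬ ∀ x ∈ (maximalIdeal R) ^ 0, x * b = 0 := by
    intro h
    have := h 1 (by simp)
    simpa [hbne] using this
  have hkpos : 0 < Nat.find hex := by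
    rcases Nat.eq_zero_or_pos (Nat.find hex) with h | h
    · exact absurd (h ▸ hfind) h0
    · exact h
  have hnotprev := Nat.find_min hex (m := Nat.find hex - 1) (by omega)
  push_neg at hnotprev
  obtain ⟨x, hx1, hx2⟩ := hnotprev
  refine ⟨x * b, hx2, ?_⟩
  intro s hs
  have hxs : x * s ∈ (maximalIdeal R) ^ Nat.find hex := by
    have : (maximalIdeal R) ^ Nat.find hex = (maximalIdeal R) ^ (Nat.find hex - 1) * maximalIdeal R := by
      conv_lhs => rw [show Nat.find hex = (Nat.find hex - 1) + 1 by omega]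
      rw [pow_succ]
    rw [this]
    exact Ideal.mul_mem_mul hx1 hs
  have := hfind (x * s) hxs
  calc x * b * s = x * s * b := by ring
  _ = 0 := this

theorem statement_11 {R : Type*} [CommRing R] [IsNoetherianRing R] [IsLocalRing R] :
    (∃ f : R[X], f ≠ 0 ∧ f ∈ zeroFunctions (Set.univ : Set R)) ↔
      ((∀ a ∈ maximalIdeal R, a ∉ nonZeroDivisors R) ∧ Finite (ResidueField R)) := by
  constructor
  · rintro ⟨f, hf0, hf⟩
    rw [mem_zeroFunctions_iff] at hf
    have heval : ∀ r : R, f.eval r = 0 := fun r => hf r (Set.mem_univ r)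
    constructor
    · intro a ha hNZD
      refine hf0 (eq_zero_of_eval_zero_aux f.natDegree (fun i => a ^ i) ?_ f le_rfl
        (fun i _ => heval _))
      intro i j hij
      have hij' : i + (j - i) = j := by omega
      have hfac : a ^ j - a ^ i = a ^ i * (a ^ (j - i) - 1) := by
        rw [mul_sub, mul_one, ← pow_add, hij']
      rw [hfac]
      refine mul_mem (pow_mem hNZD i) ?_
      have hu : IsUnit (a ^ (j - i) - 1) := by
        rw [← IsLocalRing.notMem_maximalIdeal]
        intro hmem
        have hpow : a ^ (j - i) ∈ maximalIdeal R := by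
          have : j - i ≠ 0 := by omega
          obtain ⟨k, hk⟩ := Nat.exists_eq_succ_of_ne_zero this
          rw [hk, pow_succ']
          exact Ideal.mul_mem_right _ _ ha
        have : (1 : R) ∈ maximalIdeal R := by
          have := Submodule.sub_mem _ hpow hmem
          simpa using this
        exact (maximalIdeal.isMaximal R).ne_top (Ideal.eq_top_of_isUnit_mem _ this isUnit_one)
      exact hu.mem_nonZeroDivisors
    · by_contra hinf
      rw [not_finite_iff_infinite] at hinf
      obtain e := Infinite.natEmbedding (ResidueField R)
      have hsurj := IsLocalRing.residue_surjective (R := R)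
      set v : ℕ → R := fun i => Function.surjInv hsurj (e i) with hv
      have hres : ∀ i, residue R (v i) = e i := fun i => Function.surjInv_eq hsurj (e i)
      refine hf0 (eq_zero_of_eval_zero_aux f.natDegree v ?_ f le_rfl (fun i _ => heval _))
      intro i j hij
      have : v j - v i ∉ maximalIdeal R := by
        intro hmem
        have : residue R (v j - v i) = 0 :=
          Ideal.Quotient.eq_zero_iff_mem.mpr hmem
        rw [map_sub, hres, hres, sub_eq_zero] at this
        exact (by omega : i ≠ j) (e.injective this.symm)
      exact (IsLocalRing.notMem_maximalIdeal.mp this).mem_nonZeroDivisors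
  · rintro ⟨hzd, hfin⟩
    classical
    obtain ⟨c, hc0, hc⟩ := exists_ann hzd
    have : Fintype (ResidueField R) := Fintype.ofFinite _
    have hsurj := IsLocalRing.residue_surjective (R := R)
    set s : ResidueField R → R := fun y => Function.surjInv hsurj y with hs
    have hres : ∀ y, residue R (s y) = y := fun y => Function.surjInv_eq hsurj y
    set g : R[X] := ∏ y : ResidueField R, (X - C (s y)) with hg
    have hgm : g.Monic := monic_prod_of_monic _ _ (fun y _ => monic_X_sub_C (s y))
    refine ⟨C c * g, ?_, ?_⟩
    · intro h
      have : (C c * g).coeff g.natDegree = c := by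
        rw [coeff_C_mul, hgm.coeff_natDegree, mul_one]
      rw [h] at this
      simp at this
      exact hc0 this.symm
    · rw [mem_zeroFunctions_iff]
      intro r _
      rw [eval_mul, eval_C]
      have hge : g.eval r = ∏ y : ResidueField R, (r - s y) := by
        rw [hg, eval_prod]
        simp
      rw [hge, ← Finset.mul_prod_erase Finset.univ _ (Finset.mem_univ (residue R r)),
        ← mul_assoc]
      have hmem : r - s (residue R r) ∈ maximalIdeal R := by
        refine Ideal.Quotient.eq_zero_iff_mem.mp ?_
        show residue R _ = 0
        rw [map_sub, hres, sub_self]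
      rw [hc _ hmem, zero_mul]
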